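/- Let G be a group acting faithfully on a linearly ordered set Ω such that for every g ∈ G the map x ↦ g•x is monotone (hence an order-automorphism of Ω). Then G is left-orderable: there exists a strict total order ≺ on G such that a ≺ b implies ga ≺ gb for all g, a, b ∈ G. -/

import Mathlib

/-- A group acting faithfully by monotone maps on a linearly ordered set is
left-orderable. -/
theorem leftOrderable_of_faithful_monotone_action {G Ω : Type*} [Group G]
    [LinearOrder Ω] [MulAction G Ω]
    (hmono : ∀ g : G, Monotone (fun x : Ω => g • x))
    (hfaith : ∀ g : G, (∀ x : Ω, g • x = x) → g = 1) :
    ∃ lt : G → G → Prop, IsStrictTotalOrder G lt ∧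
      ∀ g a b : G, lt a b → lt (g * a) (g * b) := by
  -- strict monotonicity of each g
  have hsm : ∀ g : G, StrictMono (fun x : Ω => g • x) := fun g =>
    (hmono g).strictMono_of_injective (MulAction.injective g)
  -- a well order on Ω
  let r : Ω → Ω → Prop := WellOrderingRel
  have hwo : IsWellOrder Ω r := WellOrderingRel.isWellOrder
  -- the order: first (w.r.t. r) point of disagreement decides
  refine ⟨fun a b => ∃ x : Ω, a • x < b • x ∧ ∀ y, r y x → a • y = b • y, ?_, ?_⟩
  · refine { trichotomous := ?_, irrefl := ?_, trans := ?_ }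
    · -- trichotomy
      intro a b
      have key : ∀ {P Q R : Prop}, (P ∨ R ∨ Q) → ¬P → ¬Q → R := by tauto
      apply key
      by_cases hab : a = b
      · exact Or.inr (Or.inl hab)
      · have hne : ∃ x : Ω, a • x ≠ b • x := by
          by_contra h
          push_neg at h
          apply hab
          have : a⁻¹ * b = 1 := by
            apply hfaith
            intro x
            rw [mul_smul, ← h x, inv_smul_smul]
          have := congrArg (a * ·) this
          simpa using this.symm
        obtain ⟨x, hx, hmin⟩ := hwo.wf.has_min {x : Ω | a • x ≠ b • x} hne
        have heq : ∀ y, r y x → a • y = b • y := fun y hy => by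
          by_contra h; exact hmin y h hy
        rcases lt_or_gt_of_ne hx with h | h
        · exact Or.inl ⟨x, h, heq⟩
        · exact Or.inr (Or.inr ⟨x, h, fun y hy => (heq y hy).symm⟩)
    · -- irreflexive
      rintro a ⟨x, hx, -⟩
      exact lt_irrefl _ hx
    · -- transitive
      rintro a b c ⟨x, hx, hxe⟩ ⟨y, hy, hye⟩
      rcases @trichotomous Ω r _ x y with h | h | h
      · exact ⟨x, by rw [hye x h] at hx; exact hx,
          fun w hw => (hxe w hw).trans (hye w (_root_.trans_of r hw h))⟩
      · subst h
        exact ⟨x, hx.trans hy, fun w hw => (hxe w hw).trans (hye w hw)⟩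
      · exact ⟨y, by rw [hxe y h]; exact hy,
          fun w hw => (hxe w (_root_.trans_of r hw h)).trans (hye w hw)⟩
  · -- left invariance
    rintro g a b ⟨x, hx, hxe⟩
    refine ⟨x, ?_, fun y hy => ?_⟩
    · simpa [mul_smul] using hsm g hx
    · simp [mul_smul, hxe y hy]
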